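/- For m, n ∈ ℕ and k, l ∈ ℕ ∪ {∞}, let I_{m,k} denote the graded F[t]-module t^m F[t]/(t^{m+k}) (so I_{m,∞} = t^m F[t]). Then I_{m,k} ⊗_{F[t]} I_{n,l} ≅ I_{m+n, min{k,l}} as graded F[t]-modules. -/

import Mathlib

open Polynomial
open scoped TensorProduct

/-- `t^e` for `e ∈ ℕ ∪ {∞}`, with the convention `t^∞ = 0`. -/
noncomputable def tpow (F : Type) [Field F] : ℕ∞ → F[X]
  | none => 0
  | some n => X ^ n

/-- The graded interval module `I_{m,k} = t^m F[t]/(t^{m+k})`, for `k ∈ ℕ ∪ {∞}`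
(so `I_{m,∞} = t^m F[t]`). -/
noncomputable abbrev It (F : Type) [Field F] (m : ℕ) (k : ℕ∞) :=
  (Submodule.span F[X] {(X : F[X]) ^ m}) ⧸
    (Submodule.comap (Submodule.span F[X] {(X : F[X]) ^ m}).subtype
      (Submodule.span F[X] {tpow F ((m : ℕ∞) + k)}))

/-- The homogeneous elements of degree `d` of the interval module `I_{m,k}`:
images of homogeneous polynomials of degree `d`. -/
noncomputable def ItHomog (F : Type) [Field F] (m : ℕ) (k : ℕ∞) (d : ℕ) : Set (It F m k) :=
  (Submodule.mkQ _) ''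
    {p : Submodule.span F[X] {(X : F[X]) ^ m} | ∀ j ≠ d, (p : F[X]).coeff j = 0}

section
variable (F : Type) [Field F]

lemma tpow_coe (n : ℕ) : tpow F (n : ℕ∞) = X ^ n := rfl
lemma tpow_top : tpow F ⊤ = 0 := rfl

lemma tpow_dvd {k l : ℕ∞} (h : k ≤ l) : tpow F k ∣ tpow F l := by
  cases l with
  | top => exact dvd_zero _
  | coe l' =>
    cases k with
    | top => simp at h
    | coe k' =>
      simp only [tpow]
      exact pow_dvd_pow _ (by exact_mod_cast h)

noncomputable def itMap (m : ℕ) (k : ℕ∞) : F[X] →ₗ[F[X]] It F m k :=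
  (Submodule.mkQ _).comp (LinearMap.toSpanSingleton F[X] _
    ⟨(X : F[X]) ^ m, Submodule.mem_span_singleton_self _⟩)

lemma itMap_apply (m : ℕ) (k : ℕ∞) (p : F[X]) :
    itMap F m k p = Submodule.mkQ _
      (p • (⟨(X : F[X]) ^ m, Submodule.mem_span_singleton_self _⟩ :
        Submodule.span F[X] {(X : F[X]) ^ m})) := rfl

lemma itMap_ker (m : ℕ) (k : ℕ∞) :
    LinearMap.ker (itMap F m k) = Submodule.span F[X] {tpow F k} := by
  ext p
  rw [LinearMap.mem_ker, itMap_apply, Submodule.mkQ_apply, Submodule.Quotient.mk_eq_zero,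
    Submodule.mem_comap]
  have hcoe : ((p • (⟨(X : F[X]) ^ m, Submodule.mem_span_singleton_self _⟩ :
      Submodule.span F[X] {(X : F[X]) ^ m}) : Submodule.span F[X] {(X : F[X]) ^ m}) : F[X])
      = p * X ^ m := rfl
  rw [Submodule.subtype_apply, hcoe]
  cases k with
  | top =>
    have : ((m : ℕ∞) + ⊤) = ⊤ := by simp
    rw [this]
    simp [tpow_top, Ideal.submodule_span_eq, Ideal.mem_span_singleton, zero_dvd_iff,
      mul_eq_zero, pow_ne_zero m (X_ne_zero (R := F))]
  | coe k' =>
    have : ((m : ℕ∞) + (k' : ℕ∞)) = ((m + k' : ℕ) : ℕ∞) := by push_cast; ring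
    rw [this, tpow_coe, tpow_coe, Ideal.submodule_span_eq, Ideal.submodule_span_eq,
      Ideal.mem_span_singleton, Ideal.mem_span_singleton, pow_add]
    constructor
    · intro h
      rw [mul_comm ((X : F[X]) ^ m) ((X : F[X]) ^ k')] at h
      exact (mul_dvd_mul_iff_right (pow_ne_zero m (X_ne_zero (R := F)))).1 h
    · intro h
      rw [mul_comm ((X : F[X]) ^ m) ((X : F[X]) ^ k')]
      exact mul_dvd_mul h dvd_rfl

lemma itMap_surjective (m : ℕ) (k : ℕ∞) : Function.Surjective (itMap F m k) := by
  intro z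
  obtain ⟨⟨q, hq⟩, rfl⟩ := Submodule.Quotient.mk_surjective _ z
  obtain ⟨a, ha⟩ := Ideal.mem_span_singleton.1 hq
  refine ⟨a, ?_⟩
  rw [itMap_apply, Submodule.mkQ_apply]
  refine congrArg _ (Subtype.ext ?_)
  show a • (X : F[X]) ^ m = q
  rw [smul_eq_mul, mul_comm, ← ha]

noncomputable def itEquiv (m : ℕ) (k : ℕ∞) :
    (F[X] ⧸ Submodule.span F[X] {tpow F k}) ≃ₗ[F[X]] It F m k :=
  (Submodule.quotEquivOfEq _ _ (itMap_ker F m k).symm).trans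
    ((itMap F m k).quotKerEquivOfSurjective (itMap_surjective F m k))

lemma itEquiv_mk (m : ℕ) (k : ℕ∞) (p : F[X]) :
    itEquiv F m k (Submodule.Quotient.mk p) = itMap F m k p := rfl


lemma span_tpow_le {k l : ℕ∞} (h : k ≤ l) :
    Submodule.span F[X] {tpow F l} ≤ Submodule.span F[X] {tpow F k} := by
  rw [Submodule.span_singleton_le_iff_mem, Ideal.submodule_span_eq,
    Ideal.mem_span_singleton]
  exact tpow_dvd F h

lemma span_tpow_sup (k l : ℕ∞) :
    Submodule.span F[X] {tpow F k} ⊔ Submodule.span F[X] {tpow F l} =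
      Submodule.span F[X] {tpow F (min k l)} := by
  rcases le_total k l with h | h
  · rw [min_eq_left h, sup_eq_left]
    exact span_tpow_le F h
  · rw [min_eq_right h, sup_eq_right]
    exact span_tpow_le F h

lemma smul_top_eq {R : Type*} [CommRing R] (A B C : Ideal R) (h : A ⊔ B = C) :
    A • (⊤ : Submodule R (R ⧸ (B : Submodule R R))) =
      Submodule.map (B : Submodule R R).mkQ C := by
  apply le_antisymm
  · rw [Submodule.smul_le]
    intro r hr x _
    obtain ⟨y, rfl⟩ := Submodule.mkQ_surjective _ x
    refine ⟨r * y, ?_, ?_⟩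
    · exact Ideal.mul_mem_right y C (h ▸ Submodule.mem_sup_left hr)
    · rw [← smul_eq_mul, map_smul]
  · rintro _ ⟨c, hc, rfl⟩
    rw [← h] at hc
    obtain ⟨a, ha, b, hb, rfl⟩ := Submodule.mem_sup.1 hc
    rw [map_add, Submodule.mkQ_apply, Submodule.mkQ_apply,
      (Submodule.Quotient.mk_eq_zero _).2 hb, add_zero]
    have : (Submodule.Quotient.mk a : R ⧸ (B : Submodule R R)) =
        a • Submodule.Quotient.mk (1 : R) := by
      rw [← Submodule.Quotient.mk_smul, smul_eq_mul, mul_one]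
    rw [this]
    exact Submodule.smul_mem_smul ha Submodule.mem_top

noncomputable def bigEquiv (m n : ℕ) (k l : ℕ∞) :
    (It F m k ⊗[F[X]] It F n l) ≃ₗ[F[X]] It F (m + n) (min k l) :=
  TensorProduct.congr (itEquiv F m k).symm (itEquiv F n l).symm ≪≫ₗ
  TensorProduct.quotTensorEquivQuotSMul (F[X] ⧸ Submodule.span F[X] {tpow F l})
    (Submodule.span F[X] {tpow F k}) ≪≫ₗ
  Submodule.quotEquivOfEq _ _
    (smul_top_eq (Submodule.span F[X] {tpow F k}) (Submodule.span F[X] {tpow F l})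
      (Submodule.span F[X] {tpow F (min k l)}) (span_tpow_sup F k l)) ≪≫ₗ
  Submodule.quotientQuotientEquivQuotient _ _ (span_tpow_le F (min_le_right k l)) ≪≫ₗ
  itEquiv F (m + n) (min k l)

lemma bigEquiv_apply (m n : ℕ) (k l : ℕ∞) (p q : F[X]) :
    bigEquiv F m n k l (itMap F m k p ⊗ₜ[F[X]] itMap F n l q) =
      itMap F (m + n) (min k l) (p * q) := by
  have h1 : (itEquiv F m k).symm (itMap F m k p) = Submodule.Quotient.mk p :=
    (itEquiv F m k).symm_apply_eq.2 (itEquiv_mk F m k p).symm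
  have h2 : (itEquiv F n l).symm (itMap F n l q) = Submodule.Quotient.mk q :=
    (itEquiv F n l).symm_apply_eq.2 (itEquiv_mk F n l q).symm
  rw [bigEquiv]
  simp only [LinearEquiv.trans_apply, TensorProduct.congr_tmul, h1, h2]
  rw [show (Submodule.Quotient.mk p :
      F[X] ⧸ Submodule.span F[X] {tpow F k}) = Ideal.Quotient.mk _ p from rfl,
    TensorProduct.quotTensorEquivQuotSMul_mk_tmul]
  rw [show p • (Submodule.Quotient.mk q : F[X] ⧸ Submodule.span F[X] {tpow F l}) =
      Submodule.Quotient.mk (p * q) from by rw [← Submodule.Quotient.mk_smul, smul_eq_mul]]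
  rw [Submodule.quotEquivOfEq_mk]
  rw [show Submodule.quotientQuotientEquivQuotient
      (Submodule.span F[X] {tpow F l}) (Submodule.span F[X] {tpow F (min k l)})
      (span_tpow_le F (min_le_right k l))
      (Submodule.Quotient.mk (Submodule.Quotient.mk (p * q))) =
      Submodule.Quotient.mk (p * q) from
    Submodule.quotientQuotientEquivQuotientAux_mk_mk _ _ _ _]
  exact itEquiv_mk F (m + n) (min k l) (p * q)


lemma itMap_homog (m : ℕ) (k : ℕ∞) (c : F) (e d : ℕ) (h : m + e = d) :
    itMap F m k (C c * X ^ e) ∈ ItHomog F m k d := by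
  refine ⟨(C c * X ^ e) • ⟨(X : F[X]) ^ m, Submodule.mem_span_singleton_self _⟩, ?_, rfl⟩
  intro j hj
  show ((C c * X ^ e) • (X : F[X]) ^ m).coeff j = 0
  rw [smul_eq_mul, mul_assoc, ← pow_add, coeff_C_mul, coeff_X_pow]
  have : j ≠ e + m := by omega
  simp [this]

lemma zero_mem_homog (m : ℕ) (k : ℕ∞) (d : ℕ) : (0 : It F m k) ∈ ItHomog F m k d :=
  ⟨0, by intro j _; simp, by simp⟩

end

/-- **Tensor product of interval modules.**  For `m, n ∈ ℕ` and `k, l ∈ ℕ ∪ {∞}`,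
`I_{m,k} ⊗_{F[t]} I_{n,l} ≅ I_{m+n, min{k,l}}` as graded `F[t]`-modules: there is an
`F[t]`-linear isomorphism sending tensors of homogeneous elements of degrees `d₁`, `d₂`
to homogeneous elements of degree `d₁ + d₂`. -/
theorem interval_tensor (F : Type) [Field F] (m n : ℕ) (k l : ℕ∞) :
    ∃ e : (It F m k ⊗[F[X]] It F n l) ≃ₗ[F[X]] It F (m + n) (min k l),
      ∀ (d₁ d₂ : ℕ) (x : It F m k) (y : It F n l),
        x ∈ ItHomog F m k d₁ → y ∈ ItHomog F n l d₂ →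
          e (x ⊗ₜ[F[X]] y) ∈ ItHomog F (m + n) (min k l) (d₁ + d₂) := by
  refine ⟨bigEquiv F m n k l, ?_⟩
  intro d₁ d₂ x y hx hy
  obtain ⟨p, hp, rfl⟩ := hx
  obtain ⟨q, hq, rfl⟩ := hy
  set c : F := (p : F[X]).coeff d₁ with hc
  set c' : F := (q : F[X]).coeff d₂ with hc'
  have hp' : (p : F[X]) = C c * X ^ d₁ := by
    ext j
    rcases eq_or_ne j d₁ with rfl | hj
    · simp [coeff_C_mul, coeff_X_pow, hc]
    · simp [hp j hj, coeff_C_mul, coeff_X_pow, hj]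
  have hq' : (q : F[X]) = C c' * X ^ d₂ := by
    ext j
    rcases eq_or_ne j d₂ with rfl | hj
    · simp [coeff_C_mul, coeff_X_pow, hc']
    · simp [hq j hj, coeff_C_mul, coeff_X_pow, hj]
  rcases eq_or_ne c 0 with h0 | h0
  · have : (p : F[X]) = 0 := by rw [hp', h0]; simp
    have hp0 : p = 0 := Subtype.ext this
    rw [hp0]
    simp only [map_zero, TensorProduct.zero_tmul, map_zero]
    exact zero_mem_homog F _ _ _
  rcases eq_or_ne c' 0 with h0' | h0'
  · have : (q : F[X]) = 0 := by rw [hq', h0']; simp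
    have hq0 : q = 0 := Subtype.ext this
    rw [hq0]
    simp only [map_zero, TensorProduct.tmul_zero, map_zero]
    exact zero_mem_homog F _ _ _
  -- degrees bounds
  have hdvd₁ : (X : F[X]) ^ m ∣ (p : F[X]) := Ideal.mem_span_singleton.1 p.2
  have hdvd₂ : (X : F[X]) ^ n ∣ (q : F[X]) := Ideal.mem_span_singleton.1 q.2
  have hm : m ≤ d₁ := by
    by_contra hlt
    exact h0 (by simpa using (Polynomial.X_pow_dvd_iff.1 hdvd₁) d₁ (by omega))
  have hn : n ≤ d₂ := by
    by_contra hlt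
    exact h0' (by simpa using (Polynomial.X_pow_dvd_iff.1 hdvd₂) d₂ (by omega))
  have hxmap : Submodule.mkQ _ p = itMap F m k (C c * X ^ (d₁ - m)) := by
    rw [itMap_apply, Submodule.mkQ_apply, Submodule.mkQ_apply]
    refine congrArg _ (Subtype.ext ?_).symm
    show (C c * X ^ (d₁ - m)) • (X : F[X]) ^ m = (p : F[X])
    rw [smul_eq_mul, mul_assoc, ← pow_add, Nat.sub_add_cancel hm, hp']
  have hymap : Submodule.mkQ _ q = itMap F n l (C c' * X ^ (d₂ - n)) := by
    rw [itMap_apply, Submodule.mkQ_apply, Submodule.mkQ_apply]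
    refine congrArg _ (Subtype.ext ?_).symm
    show (C c' * X ^ (d₂ - n)) • (X : F[X]) ^ n = (q : F[X])
    rw [smul_eq_mul, mul_assoc, ← pow_add, Nat.sub_add_cancel hn, hq']
  rw [hxmap, hymap, bigEquiv_apply]
  have : (C c * X ^ (d₁ - m)) * (C c' * X ^ (d₂ - n)) =
      C (c * c') * X ^ ((d₁ - m) + (d₂ - n)) := by
    rw [C_mul, pow_add]; ring
  rw [this]
  exact itMap_homog F (m + n) (min k l) (c * c') _ _ (by omega)
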